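/- Let I ⊆ ℚ[X] = ℚ[x₁,…,x_m] be a homogeneous ideal generated by homogeneous polynomials f₁,…,f_r with integer coefficients, let p be a prime number, and let I_p = ⟨f₁ mod p,…, f_r mod p⟩ ⊆ 𝔽_p[X]. Then for every degree n, dim_{𝔽_p}(I_p[n]) ≤ dim_ℚ(I[n]); equivalently, dim_ℚ((ℚ[X]/I)_n) ≤ dim_{𝔽_p}((𝔽_p[X]/I_p)_n) for every n. -/

import Mathlib

open MvPolynomial


-- Sub-lemma F: the degree-k component of c * q lies in the span of monomial multiples of q.
theorem aux_compF {R : Type*} [CommRing R] {m : ℕ} (c q : MvPolynomial (Fin m) R) {dq k : ℕ}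
    (hq : q.IsHomogeneous dq) :
    homogeneousComponent k (c * q) ∈
      Submodule.span R {x : MvPolynomial (Fin m) R |
        ∃ μ : Fin m →₀ ℕ, μ.degree + dq = k ∧ x = monomial μ 1 * q} := by
  have hdecomp : homogeneousComponent k (c * q)
      = ∑ e ∈ Finset.range (c.totalDegree + 1),
          homogeneousComponent k (homogeneousComponent e c * q) := by
    conv_lhs => rw [← sum_homogeneousComponent c]
    rw [Finset.sum_mul, map_sum]
  rw [hdecomp]
  apply Submodule.sum_mem
  intro e _
  have hmem : homogeneousComponent e c * q ∈ homogeneousSubmodule (Fin m) R (e + dq) :=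
    (homogeneousComponent_isHomogeneous e c).mul hq
  rw [homogeneousComponent_of_mem hmem]
  split_ifs with hk
  · set h := homogeneousComponent e c with hh_def
    have hh : h.IsHomogeneous e := homogeneousComponent_isHomogeneous e c
    have hsum : h * q = ∑ μ ∈ h.support, coeff μ h • (monomial μ 1 * q) := by
      conv_lhs => rw [h.as_sum, Finset.sum_mul]
      refine Finset.sum_congr rfl fun μ _ => ?_
      rw [← smul_mul_assoc, smul_monomial, smul_eq_mul, mul_one]
    rw [hsum]
    apply Submodule.sum_mem
    intro μ hμ
    have hdeg : μ.degree = e := by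
      by_contra hne
      exact (mem_support_iff.mp hμ) (hh.coeff_eq_zero hne)
    exact Submodule.smul_mem _ _ (Submodule.subset_span ⟨μ, by rw [hdeg, hk], rfl⟩)
  · exact Submodule.zero_mem _

-- Lemma A: description of the degree-k part of a homogeneous ideal.
theorem aux_spanDescr {R : Type*} [CommRing R] {m r : ℕ} (g : Fin r → MvPolynomial (Fin m) R)
    (d : Fin r → ℕ) (hg : ∀ i, (g i).IsHomogeneous (d i)) (k : ℕ) :
    (Submodule.restrictScalars R (Ideal.span (Set.range g)) ⊓ homogeneousSubmodule (Fin m) R k)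
    = Submodule.span R {x : MvPolynomial (Fin m) R |
        ∃ (i : Fin r) (μ : Fin m →₀ ℕ), μ.degree + d i = k ∧ x = monomial μ 1 * g i} := by
  apply le_antisymm
  · rintro x ⟨hxI, hxh⟩
    simp only [SetLike.mem_coe, Submodule.restrictScalars_mem] at hxI hxh
    obtain ⟨c, hc⟩ := (Submodule.mem_span_range_iff_exists_fun _).mp hxI
    have hxcomp : homogeneousComponent k x = x := by
      rw [homogeneousComponent_of_mem hxh, if_pos rfl]
    rw [← hxcomp, ← hc, map_sum]
    apply Submodule.sum_mem
    intro i _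
    rw [smul_eq_mul]
    refine Submodule.span_mono ?_ (aux_compF (c i) (g i) (hg i))
    rintro y ⟨μ, hμ, rfl⟩
    exact ⟨i, μ, hμ, rfl⟩
  · rw [Submodule.span_le]
    rintro x ⟨i, μ, hdeg, rfl⟩
    refine ⟨?_, ?_⟩
    · exact Ideal.mul_mem_left _ _ (Ideal.subset_span ⟨i, rfl⟩)
    · have := (isHomogeneous_monomial (1 : R) (rfl : μ.degree = μ.degree)).mul (hg i)
      rwa [hdeg] at this

-- Lemma D: linear independence mod p implies linear independence over ℚ.
theorem aux_indep {m p : ℕ} (hp : p.Prime) {ι : Type*} [Fintype ι]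
    (u : ι → MvPolynomial (Fin m) ℤ)
    (h : LinearIndependent (ZMod p)
      (fun j => MvPolynomial.map (Int.castRingHom (ZMod p)) (u j))) :
    LinearIndependent ℚ (fun j => MvPolynomial.map (Int.castRingHom ℚ) (u j)) := by
  have hZ : LinearIndependent ℤ u := by
    rw [Fintype.linearIndependent_iff]
    have key : ∀ N : ℕ, ∀ g : ι → ℤ, (∑ j, (g j).natAbs) ≤ N →
        ∑ j, g j • u j = 0 → ∀ j, g j = 0 := by
      intro N
      induction N with
      | zero =>
        intro g hg _ j
        have h0 : ∑ j, (g j).natAbs = 0 := Nat.le_zero.mp hg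
        have := (Finset.sum_eq_zero_iff.mp h0) j (Finset.mem_univ j)
        exact Int.natAbs_eq_zero.mp this
      | succ N ih =>
        intro g hg hrel j
        by_cases h0 : ∀ j', g j' = 0
        · exact h0 j
        · push_neg at h0
          obtain ⟨j0, hj0⟩ := h0
          have hdvd : ∀ j', (p : ℤ) ∣ g j' := by
            intro j'
            have h2 := congrArg (MvPolynomial.map (Int.castRingHom (ZMod p))) hrel
            rw [map_sum, map_zero] at h2
            simp only [map_zsmul] at h2
            have hrel' : ∑ j, ((g j : ZMod p)) •
                (MvPolynomial.map (Int.castRingHom (ZMod p)) (u j)) = 0 := by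
              simpa only [Int.cast_smul_eq_zsmul] using h2
            have := (Fintype.linearIndependent_iff.mp h) _ hrel' j'
            exact (ZMod.intCast_zmod_eq_zero_iff_dvd _ p).mp this
          set g' := fun j' => g j' / (p : ℤ) with hg'
          have hmul : ∀ j', g j' = (p : ℤ) * g' j' :=
            fun j' => (Int.mul_ediv_cancel' (hdvd j')).symm
          have hrel2 : ∑ j', g' j' • u j' = 0 := by
            have hps : (p : ℤ) • (∑ j', g' j' • u j') = 0 := by
              rw [Finset.smul_sum]
              rw [← hrel]
              refine Finset.sum_congr rfl fun j' _ => ?_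
              rw [smul_smul, ← hmul]
            have hp0 : ((p : ℤ) : MvPolynomial (Fin m) ℤ) ≠ 0 := by
              exact_mod_cast (Int.natCast_ne_zero.mpr hp.ne_zero)
            rcases mul_eq_zero.mp (by rwa [zsmul_eq_mul] at hps) with hc | hc
            · exact absurd hc hp0
            · exact hc
          have hmeas : ∑ j', (g' j').natAbs < ∑ j', (g j').natAbs := by
            apply Finset.sum_lt_sum
            · intro j' _
              rw [hmul j', Int.natAbs_mul]
              exact Nat.le_mul_of_pos_left _ (by simpa using hp.pos)
            · refine ⟨j0, Finset.mem_univ j0, ?_⟩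
              rw [hmul j0, Int.natAbs_mul]
              have hgn : (g' j0).natAbs ≠ 0 := by
                intro hc
                apply hj0
                rw [hmul j0, Int.natAbs_eq_zero.mp hc, mul_zero]
              have : 1 < (p : ℤ).natAbs := by
                simpa using hp.one_lt
              calc (g' j0).natAbs = 1 * (g' j0).natAbs := (one_mul _).symm
                _ < (p : ℤ).natAbs * (g' j0).natAbs :=
                    (Nat.mul_lt_mul_right (Nat.pos_of_ne_zero hgn)).mpr this
          have hzero := ih g' (by omega) hrel2
          rw [hmul j, hzero j, mul_zero]
    intro g hrel j
    exact key (∑ j, (g j).natAbs) g le_rfl hrel j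
  -- Push through the injective ℤ-linear map to MvPolynomial (Fin m) ℚ
  have hinj : Function.Injective (MvPolynomial.map (Int.castRingHom ℚ)
      : MvPolynomial (Fin m) ℤ → MvPolynomial (Fin m) ℚ) :=
    MvPolynomial.map_injective _ (fun a b hab => by
      have : ((a : ℚ)) = (b : ℚ) := hab
      exact_mod_cast this)
  have hZ' : LinearIndependent ℤ (fun j => MvPolynomial.map (Int.castRingHom ℚ) (u j)) := by
    have := hZ.map' ((MvPolynomial.map (Int.castRingHom ℚ)).toAddMonoidHom.toIntLinearMap)
      (LinearMap.ker_eq_bot.mpr hinj)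
    exact this
  exact (LinearIndependent.iff_fractionRing ℤ ℚ).mp hZ'

-- Lemma C: rank comparison for spans of reductions of a finite integer set.
theorem aux_rank_le {m p : ℕ} (hp : p.Prime) (T : Set (MvPolynomial (Fin m) ℤ))
    (hT : T.Finite) :
    Module.finrank (ZMod p)
      (Submodule.span (ZMod p) (MvPolynomial.map (Int.castRingHom (ZMod p)) '' T)) ≤
    Module.finrank ℚ
      (Submodule.span ℚ (MvPolynomial.map (Int.castRingHom ℚ) '' T)) := by
  haveI : Fact p.Prime := ⟨hp⟩
  obtain ⟨b, hbsub, hbspan, hbind⟩ :=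
    exists_linearIndependent (ZMod p) (MvPolynomial.map (Int.castRingHom (ZMod p)) '' T)
  have hbfin : b.Finite := (hT.image _).subset hbsub
  haveI : Fintype b := hbfin.fintype
  rw [← hbspan, finrank_span_set_eq_card hbind]
  have hchoice : ∀ x : b, ∃ y, y ∈ T ∧ MvPolynomial.map (Int.castRingHom (ZMod p)) y = (x : _) :=
    fun x => by
      obtain ⟨y, hy, hy2⟩ := hbsub x.2
      exact ⟨y, hy, hy2⟩
  choose u hu1 hu2 using hchoice
  have hind_p : LinearIndependent (ZMod p)
      (fun x : b => MvPolynomial.map (Int.castRingHom (ZMod p)) (u x)) := by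
    have : (fun x : b => MvPolynomial.map (Int.castRingHom (ZMod p)) (u x))
        = (fun x : b => (x : MvPolynomial (Fin m) (ZMod p))) := funext fun x => hu2 x
    rw [this]
    exact hbind
  have hindQ := aux_indep hp u hind_p
  haveI : FiniteDimensional ℚ
      (Submodule.span ℚ (MvPolynomial.map (Int.castRingHom ℚ) '' T)) :=
    FiniteDimensional.span_of_finite ℚ (hT.image _)
  set W := Submodule.span ℚ (MvPolynomial.map (Int.castRingHom ℚ) '' T) with hW
  have hwmem : ∀ x : b, MvPolynomial.map (Int.castRingHom ℚ) (u x) ∈ W :=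
    fun x => Submodule.subset_span ⟨u x, hu1 x, rfl⟩
  have hindW : LinearIndependent ℚ (fun x : b => (⟨_, hwmem x⟩ : W)) := by
    apply LinearIndependent.of_comp W.subtype
    exact hindQ
  have := hindW.fintype_card_le_finrank
  rwa [Set.toFinset_card]

lemma aux_img {S : Type*} [CommRing S] {m r : ℕ} (f : Fin r → MvPolynomial (Fin m) ℤ)
    (d : Fin r → ℕ) (k : ℕ) (φ : ℤ →+* S) :
    {x : MvPolynomial (Fin m) S | ∃ (i : Fin r) (μ : Fin m →₀ ℕ),
        μ.degree + d i = k ∧ x = monomial μ 1 * MvPolynomial.map φ (f i)}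
    = MvPolynomial.map φ '' {x : MvPolynomial (Fin m) ℤ | ∃ (i : Fin r) (μ : Fin m →₀ ℕ),
        μ.degree + d i = k ∧ x = monomial μ 1 * f i} := by
  ext x
  constructor
  · rintro ⟨i, μ, hμ, rfl⟩
    exact ⟨monomial μ 1 * f i, ⟨i, μ, hμ, rfl⟩, by rw [map_mul, MvPolynomial.map_monomial, map_one]⟩
  · rintro ⟨y, ⟨i, μ, hμ, rfl⟩, rfl⟩
    exact ⟨i, μ, hμ, by rw [map_mul, MvPolynomial.map_monomial, map_one]⟩

/-- Let `I ⊆ ℚ[x₁,…,x_m]` be a homogeneous ideal generated by homogeneous polynomials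
`f₁,…,f_r` with integer coefficients, `p` a prime, and `I_p ⊆ 𝔽_p[X]` the ideal generated
by the reductions of the `fᵢ` mod `p`. Then for every degree `k`,
`dim_{𝔽_p} I_p[k] ≤ dim_ℚ I[k]`, where `J[k]` is the space of homogeneous degree-`k`
elements of `J`. -/
theorem statement15 (m r : ℕ) (f : Fin r → MvPolynomial (Fin m) ℤ)
    (d : Fin r → ℕ) (hhom : ∀ i, (f i).IsHomogeneous (d i))
    (p : ℕ) (hp : p.Prime)
    (I : Ideal (MvPolynomial (Fin m) ℚ))
    (hI : I = Ideal.span (Set.range fun i => MvPolynomial.map (Int.castRingHom ℚ) (f i)))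
    (Ip : Ideal (MvPolynomial (Fin m) (ZMod p)))
    (hIp : Ip = Ideal.span
      (Set.range fun i => MvPolynomial.map (Int.castRingHom (ZMod p)) (f i))) :
    ∀ k : ℕ,
      Module.finrank (ZMod p)
        ↥(Submodule.restrictScalars (ZMod p) Ip ⊓ homogeneousSubmodule (Fin m) (ZMod p) k) ≤
      Module.finrank ℚ
        ↥(Submodule.restrictScalars ℚ I ⊓ homogeneousSubmodule (Fin m) ℚ k) := by
  intro k
  set Tk : Set (MvPolynomial (Fin m) ℤ) :=
    {x | ∃ (i : Fin r) (μ : Fin m →₀ ℕ), μ.degree + d i = k ∧ x = monomial μ 1 * f i} with hTk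
  have hTfin : Tk.Finite := by
    have hsub : Tk ⊆ (fun q : Fin r × (Fin m →₀ ℕ) => monomial q.2 1 * f q.1) ''
        (Set.univ ×ˢ Set.Icc 0 (Finsupp.equivFunOnFinite.symm fun _ => k)) := by
      rintro x ⟨i, μ, hμ, rfl⟩
      refine ⟨(i, μ), ⟨Set.mem_univ _, ?_⟩, rfl⟩
      rw [Set.mem_Icc]
      refine ⟨zero_le, ?_⟩
      rw [Finsupp.le_def]
      intro a
      have h1 := Finsupp.le_degree a μ
      simp only [Finsupp.coe_equivFunOnFinite_symm]
      omega
    exact ((Set.finite_univ.prod (Set.finite_Icc _ _)).image _).subset hsub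
  rw [hI, hIp,
    aux_spanDescr (fun i => MvPolynomial.map (Int.castRingHom (ZMod p)) (f i)) d
      (fun i => (hhom i).map _) k,
    aux_spanDescr (fun i => MvPolynomial.map (Int.castRingHom ℚ) (f i)) d
      (fun i => (hhom i).map _) k,
    aux_img f d k (Int.castRingHom (ZMod p)),
    aux_img f d k (Int.castRingHom ℚ)]
  exact aux_rank_le hp Tk hTfin
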